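/- For every t ∈ ℝ, the point Δ_u(t) lies on the line L(t) through P(t) perpendicular to P(t) − M, and satisfies the envelope condition for the family L(t): that is, ⟨Δ_u(t) − P(t), P(t) − M⟩ = 0 and ∂/∂t [⟨X − P(t), P(t) − M⟩] evaluated at X = Δ_u(t) equals 0, i.e. ⟨Δ_u(t) − P(t), P'(t)⟩ − ⟨P'(t), P(t) − M⟩ = 0, where P'(t) = (−a sin t, b cos t). Hence Δ_u parametrizes the negative pedal curve of E with respect to the boundary point M. -/

import Mathlib

open Real

/-- Point on the ellipse with semi-axes `a, b`. -/
noncomputable def ellipsePt (a b t : ℝ) : ℝ × ℝ := (a * cos t, b * sin t)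

/-- Steiner's Hat: negative pedal curve of the ellipse w.r.t. the boundary point `M = ellipsePt a b u`. -/
noncomputable def steinerHat (a b u t : ℝ) : ℝ × ℝ :=
  (((a ^ 2 - b ^ 2) * (1 + cos (t + u)) * cos t - a ^ 2 * cos u) / a,
   ((a ^ 2 - b ^ 2) * cos t * sin (t + u) - (a ^ 2 - b ^ 2) * sin t - a ^ 2 * sin u) / b)

/-- `Δ_u(t)` lies on the line `L(t)` through `P(t)` perpendicular to `P(t) − M`,
and satisfies the envelope condition for the family `L(t)`. -/
theorem stmt0 (a b u : ℝ) (hb : 0 < b) (hab : b < a) :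
    ∀ t : ℝ,
      (((steinerHat a b u t).1 - (ellipsePt a b t).1) * ((ellipsePt a b t).1 - (ellipsePt a b u).1)
        + ((steinerHat a b u t).2 - (ellipsePt a b t).2) * ((ellipsePt a b t).2 - (ellipsePt a b u).2) = 0)
      ∧
      ((((steinerHat a b u t).1 - (ellipsePt a b t).1) * (-(a * sin t))
        + ((steinerHat a b u t).2 - (ellipsePt a b t).2) * (b * cos t))
        - ((-(a * sin t)) * ((ellipsePt a b t).1 - (ellipsePt a b u).1)
          + (b * cos t) * ((ellipsePt a b t).2 - (ellipsePt a b u).2)) = 0) := by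
  intro t
  have ha : (0:ℝ) < a := lt_trans hb hab
  have ha0 : a ≠ 0 := ha.ne'
  have hb0 : b ≠ 0 := hb.ne'
  have h1 := sin_sq_add_cos_sq t
  have h2 := sin_sq_add_cos_sq u
  constructor
  · simp only [steinerHat, ellipsePt, cos_add, sin_add]
    field_simp
    linear_combination (((a^2-b^2)*cos t*cos u - a^2)) * h1 + ((a^2 - (a^2-b^2)*cos t^2)) * h2
  · simp only [steinerHat, ellipsePt, cos_add, sin_add]
    field_simp
    linear_combination ((a^2-b^2)*cos t*sin u) * h1
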